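/- If D is an in-round strong oriented graph (there is a cyclic order of its vertices such that for every arc xy and every vertex z strictly between x and y in the cyclic order, zy is an arc), then for every vertex x the out-neighbourhood x⁺ induces a tournament and the in-neighbourhood x⁻ induces an acyclic digraph. -/

import Mathlib

/-- `A` is the arc relation of an oriented graph: no loops and no digons. -/
def IsOriented {V : Type*} (A : V → V → Prop) : Prop :=
  Irreflexive A ∧ ∀ x y, A x y → ¬ A y x

/-- `D` is strong: directed path between each ordered pair of vertices. -/
def IsStrong {V : Type*} (A : V → V → Prop) : Prop :=
  ∀ x y : V, Relation.ReflTransGen A x y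

/-- The set `S` induces a tournament. -/
def TournamentOn {V : Type*} (A : V → V → Prop) (S : Set V) : Prop :=
  ∀ x ∈ S, ∀ y ∈ S, x ≠ y → A x y ∨ A y x

/-- The set `S` induces an acyclic digraph. -/
def AcyclicOn {V : Type*} (A : V → V → Prop) (S : Set V) : Prop :=
  ∀ x : V, ¬ Relation.TransGen (fun a b => a ∈ S ∧ b ∈ S ∧ A a b) x x

/-- `z` lies strictly inside the cyclic interval `]x,y[` with respect to the
cyclic order given by `σ`. -/
def CycBtw {V : Type*} [Fintype V] (σ : V ≃ Fin (Fintype.card V)) (x z y : V) : Prop :=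
  0 < (σ z - σ x).val ∧ (σ z - σ x).val < (σ y - σ x).val

/-- `D` is in-round: some cyclic order such that for every arc `xy` and every
`z ∈ ]x,y[`, `zy` is an arc. -/
def InRound {V : Type*} [Fintype V] (A : V → V → Prop) : Prop :=
  ∃ σ : V ≃ Fin (Fintype.card V), ∀ x y z : V, A x y → CycBtw σ x z y → A z y

theorem stmt0 {V : Type*} [Fintype V] (A : V → V → Prop)
    (hor : IsOriented A) (hstrong : IsStrong A) (hround : InRound A) :
    ∀ x : V, TournamentOn A {y | A x y} ∧ AcyclicOn A {y | A y x} := by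
  obtain ⟨σ, hσ⟩ := hround
  intro x
  have hn : 0 < Fintype.card V := Fintype.card_pos_iff.mpr ⟨x⟩
  haveI : NeZero (Fintype.card V) := ⟨hn.ne'⟩
  have hpos : ∀ u v : V, u ≠ v → 0 < (σ u - σ v).val := by
    intro u v huv
    rcases Nat.eq_zero_or_pos (σ u - σ v).val with h | h
    · exact absurd (σ.injective (sub_eq_zero.mp (Fin.ext h))) huv
    · exact h
  constructor
  · intro y hy z hz hyz
    have hy' : A x y := hy
    have hz' : A x z := hz
    have hyx : y ≠ x := fun h => hor.1 x (h ▸ hy')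
    have hzx : z ≠ x := fun h => hor.1 x (h ▸ hz')
    have hne : (σ y - σ x).val ≠ (σ z - σ x).val := by
      intro h
      exact hyz (σ.injective (sub_left_injective (Fin.ext h)))
    rcases hne.lt_or_gt with h | h
    · exact Or.inl (hσ x z y hz' ⟨hpos y x hyx, h⟩)
    · exact Or.inr (hσ x y z hy' ⟨hpos z x hzx, h⟩)
  · have key : ∀ a b : V, A a x → A b x → A a b →
        (σ a - σ x).val < (σ b - σ x).val := by
      intro a b ha hb hab
      have hax : a ≠ x := fun h => hor.1 x (h ▸ ha)
      have hbx : b ≠ x := fun h => hor.1 x (h ▸ hb)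
      have hab' : a ≠ b := fun h => hor.1 b (h ▸ hab)
      have pa : 0 < (σ a - σ x).val := hpos a x hax
      have pb : 0 < (σ b - σ x).val := hpos b x hbx
      have d1 : 0 < (σ x - σ a).val := hpos x a hax.symm
      have h1 : ((σ a - σ x).val + (σ x - σ a).val) % Fintype.card V = 0 := by
        have : (σ a - σ x) + (σ x - σ a) = 0 := by abel
        have := congrArg Fin.val this
        rwa [Fin.val_add] at this
      have hsum : (σ a - σ x).val + (σ x - σ a).val = Fintype.card V := by
        have la := (σ a - σ x).isLt
        have lb := (σ x - σ a).isLt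
        exact Nat.eq_of_dvd_of_lt_two_mul (by omega) (Nat.dvd_of_mod_eq_zero h1)
          (by omega)
      have h2 : (σ b - σ a).val = ((σ b - σ x).val + (σ x - σ a).val) % Fintype.card V := by
        have : (σ b - σ x) + (σ x - σ a) = σ b - σ a := sub_add_sub_cancel _ _ _
        have := congrArg Fin.val this
        rw [Fin.val_add] at this
        omega
      by_contra hle
      push_neg at hle
      have hne : (σ a - σ x).val ≠ (σ b - σ x).val := by
        intro h
        exact hab' (σ.injective (sub_left_injective (Fin.ext h)))
      have hlt : (σ b - σ x).val < (σ a - σ x).val := lt_of_le_of_ne hle (Ne.symm hne)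
      have hd3 : (σ b - σ a).val = (σ b - σ x).val + (σ x - σ a).val := by
        rw [h2, Nat.mod_eq_of_lt]
        omega
      have hbtw : CycBtw σ a x b := ⟨d1, by omega⟩
      exact hor.2 b x hb (hσ a b x hab hbtw)
    intro w hw
    have hw' : Relation.TransGen
        (fun u v : V => (σ u - σ x).val < (σ v - σ x).val) w w :=
      Relation.TransGen.mono (fun u v h => key u v h.1 h.2.1 h.2.2) _ _ hw
    have ht : Transitive (fun u v : V => (σ u - σ x).val < (σ v - σ x).val) :=
      fun _ _ _ h1 h2 => lt_trans h1 h2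
    rw [@Relation.transGen_eq_self _ _ ⟨fun a b c => @ht a b c⟩] at hw'
    exact lt_irrefl _ hw'
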